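/- Let 0 < α ≤ s and α/s < p < ∞. For any basic cube K_i of the self-similar set K, the Choquet integral of the p-th power of the maximal function of its indicator satisfies ∫ [M^μ_D(χ_{K_i})]^p dH^α_μ ≤ (2p/(p − α/s)) μ(K_i)^{α/s}. -/

import Mathlib

open MeasureTheory Set Filter
open scoped ENNReal NNReal Topology

noncomputable section

abbrev Pt (d : ℕ) := EuclideanSpace ℝ (Fin d)

/-- An iterated function system of contractive similitudes on ℝ^d with attractor `K`
satisfying the strong separation condition. -/
structure IFS (d m : ℕ) where
  S : Fin m → Pt d → Pt d
  r : Fin m → ℝ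
  r_pos : ∀ i, 0 < r i
  r_lt_one : ∀ i, r i < 1
  similitude : ∀ i x y, dist (S i x) (S i y) = r i * dist x y
  K : Set (Pt d)
  K_nonempty : K.Nonempty
  K_compact : IsCompact K
  K_invariant : K = ⋃ i, S i '' K
  ssc : Pairwise fun i j => Disjoint (S i '' K) (S j '' K)

namespace IFS

variable {d m : ℕ}

/-- The composition `S_{i₁} ∘ ⋯ ∘ S_{iₙ}` for the word `w = i₁ ⋯ iₙ`. -/
def cylMap (Φ : IFS d m) (w : List (Fin m)) : Pt d → Pt d :=
  w.foldr (fun i g => Φ.S i ∘ g) id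

/-- The basic cube (cylinder set) `K_w = S_{i₁} ∘ ⋯ ∘ S_{iₙ}(K)`. -/
def cyl (Φ : IFS d m) (w : List (Fin m)) : Set (Pt d) :=
  Φ.cylMap w '' Φ.K

/-- `μ` is the self-similar probability measure associated with the probability
vector `p` (with all `p i > 0`), i.e. `μ = ∑ i, p i • μ ∘ S i ⁻¹`, supported on `K`. -/
def SelfSimilar (Φ : IFS d m) (p : Fin m → ℝ≥0∞) (μ : Measure (Pt d)) : Prop :=
  (∑ i, p i = 1) ∧ (∀ i, 0 < p i) ∧ IsProbabilityMeasure μ ∧ μ Φ.K = 1 ∧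
    μ = ∑ i, p i • μ.map (Φ.S i)

/-- The α-dimensional Hausdorff content on `K` associated with `μ`, defined via
coverings by countable families of basic cubes; `s` is the Hausdorff dimension of `K`. -/
def hContent (Φ : IFS d m) (μ : Measure (Pt d)) (s α : ℝ) (E : Set (Pt d)) : ℝ≥0∞ :=
  ⨅ (C : Set (List (Fin m))) (_ : C.Countable) (_ : E ⊆ ⋃ w ∈ C, Φ.cyl w),
    ∑' w : C, μ (Φ.cyl w.1) ^ (α / s)

/-- The dyadic-type Hardy–Littlewood maximal operator over basic cubes containing `x`. -/
def maxOp (Φ : IFS d m) (μ : Measure (Pt d)) (f : Pt d → ℝ) (x : Pt d) : ℝ≥0∞ :=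
  ⨆ (w : List (Fin m)) (_ : x ∈ Φ.cyl w),
    (μ (Φ.cyl w))⁻¹ * ∫⁻ y in Φ.cyl w, ENNReal.ofReal |f y| ∂μ


-- basic lemmas
theorem S_lipschitz (Φ : IFS d m) (i : Fin m) :
    LipschitzWith (Real.toNNReal (Φ.r i)) (Φ.S i) := by
  intro x y
  rw [edist_dist, edist_dist, Φ.similitude i x y, ENNReal.ofReal_mul (Φ.r_pos i).le]
  rfl

theorem S_continuous (Φ : IFS d m) (i : Fin m) : Continuous (Φ.S i) :=
  (Φ.S_lipschitz i).continuous

theorem S_injective (Φ : IFS d m) (i : Fin m) : Function.Injective (Φ.S i) := by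
  intro x y h
  have := Φ.similitude i x y
  rw [h, dist_self] at this
  have hr := Φ.r_pos i
  have : dist x y = 0 := by
    by_contra hne
    have : 0 < dist x y := lt_of_le_of_ne dist_nonneg (Ne.symm hne)
    nlinarith
  exact dist_eq_zero.mp this

theorem cylMap_nil (Φ : IFS d m) : Φ.cylMap [] = id := rfl
theorem cylMap_cons (Φ : IFS d m) (i : Fin m) (w : List (Fin m)) :
    Φ.cylMap (i :: w) = Φ.S i ∘ Φ.cylMap w := rfl

theorem cyl_nil (Φ : IFS d m) : Φ.cyl [] = Φ.K := by simp [cyl, cylMap_nil]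

theorem cyl_cons (Φ : IFS d m) (i : Fin m) (w : List (Fin m)) :
    Φ.cyl (i :: w) = Φ.S i '' Φ.cyl w := by
  rw [cyl, cylMap_cons, image_comp]; rfl

theorem cylMap_continuous (Φ : IFS d m) (w : List (Fin m)) : Continuous (Φ.cylMap w) := by
  induction w with
  | nil => exact continuous_id
  | cons i w ih => rw [cylMap_cons]; exact (Φ.S_continuous i).comp ih

theorem cyl_subset_K (Φ : IFS d m) (w : List (Fin m)) : Φ.cyl w ⊆ Φ.K := by
  induction w with
  | nil => rw [cyl_nil]
  | cons i w ih =>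
      rw [cyl_cons]
      refine (image_mono ih).trans ?_
      have : Φ.S i '' Φ.K ⊆ ⋃ j, Φ.S j '' Φ.K := subset_iUnion (fun j => Φ.S j '' Φ.K) i
      rwa [← Φ.K_invariant] at this

theorem cylMap_append (Φ : IFS d m) (u v : List (Fin m)) :
    Φ.cylMap (u ++ v) = Φ.cylMap u ∘ Φ.cylMap v := by
  induction u with
  | nil => simp [cylMap_nil]
  | cons i u ih => simp [cylMap_cons, List.cons_append, ih, Function.comp_assoc]

theorem cyl_anti (Φ : IFS d m) {u v : List (Fin m)} (h : u <+: v) : Φ.cyl v ⊆ Φ.cyl u := by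
  obtain ⟨t, rfl⟩ := h
  rw [cyl, cylMap_append, image_comp]
  exact image_mono (Φ.cyl_subset_K t)

theorem cyl_compact (Φ : IFS d m) (w : List (Fin m)) : IsCompact (Φ.cyl w) :=
  Φ.K_compact.image (Φ.cylMap_continuous w)

theorem cyl_measurable (Φ : IFS d m) (w : List (Fin m)) : MeasurableSet (Φ.cyl w) :=
  (Φ.cyl_compact w).isClosed.measurableSet

theorem prefix_or_prefix (Φ : IFS d m) :
    ∀ (u v : List (Fin m)), (Φ.cyl u ∩ Φ.cyl v).Nonempty → u <+: v ∨ v <+: u := by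
  intro u
  induction u with
  | nil => intro v _; exact Or.inl (List.nil_prefix)
  | cons i u ih =>
      intro v hv
      match v with
      | [] => exact Or.inr (List.nil_prefix)
      | j :: v =>
        rcases eq_or_ne i j with rfl | hij
        · have : (Φ.cyl u ∩ Φ.cyl v).Nonempty := by
            obtain ⟨x, hx1, hx2⟩ := hv
            rw [cyl_cons] at hx1 hx2
            obtain ⟨a, ha, hax⟩ := hx1
            obtain ⟨b, hb, hbx⟩ := hx2
            have : a = b := Φ.S_injective i (hax.trans hbx.symm)
            exact ⟨a, ha, this ▸ hb⟩
          rcases ih v this with h | h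
          · exact Or.inl (List.cons_prefix_cons.mpr ⟨rfl, h⟩)
          · exact Or.inr (List.cons_prefix_cons.mpr ⟨rfl, h⟩)
        · exfalso
          obtain ⟨x, hx1, hx2⟩ := hv
          rw [cyl_cons] at hx1 hx2
          have h1 : x ∈ Φ.S i '' Φ.K := image_mono (Φ.cyl_subset_K u) hx1
          have h2 : x ∈ Φ.S j '' Φ.K := image_mono (Φ.cyl_subset_K v) hx2
          exact (Φ.ssc hij).ne_of_mem h1 h2 rfl


variable {Φ : IFS d m} {pv : Fin m → ℝ≥0∞} {μ : Measure (Pt d)}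

theorem SelfSimilar.measure_compl_K (hμ : Φ.SelfSimilar pv μ) : μ Φ.Kᶜ = 0 := by
  obtain ⟨_, _, hprob, hK, _⟩ := hμ
  rw [measure_compl Φ.K_compact.isClosed.measurableSet (measure_ne_top μ _), hK,
    measure_univ, tsub_self]

theorem SelfSimilar.measure_cyl_cons (hμ : Φ.SelfSimilar pv μ) (i : Fin m)
    (w : List (Fin m)) : μ (Φ.cyl (i :: w)) = pv i * μ (Φ.cyl w) := by
  obtain ⟨hsum, hpos, hprob, hK, heq⟩ := hμ
  have hmeas : MeasurableSet (Φ.cyl (i :: w)) := Φ.cyl_measurable _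
  have key : ∀ j, μ (Φ.S j ⁻¹' Φ.cyl (i :: w)) = if j = i then μ (Φ.cyl w) else 0 := by
    intro j
    rcases eq_or_ne j i with rfl | hij
    · rw [if_pos rfl, cyl_cons, preimage_image_eq _ (Φ.S_injective j)]
    · rw [if_neg hij]
      refine measure_mono_null ?_ (SelfSimilar.measure_compl_K ⟨hsum, hpos, hprob, hK, heq⟩)
      intro x hx
      simp only [mem_preimage] at hx
      intro hxK
      have h1 : Φ.S j x ∈ Φ.S j '' Φ.K := mem_image_of_mem _ hxK
      have h2 : Φ.S j x ∈ Φ.S i '' Φ.K := by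
        rw [cyl_cons] at hx
        exact image_mono (Φ.cyl_subset_K w) hx
      exact (Φ.ssc hij).ne_of_mem h1 h2 rfl
  calc μ (Φ.cyl (i :: w)) = (∑ j, pv j • μ.map (Φ.S j)) (Φ.cyl (i :: w)) := by rw [← heq]
    _ = ∑ j, pv j * μ.map (Φ.S j) (Φ.cyl (i :: w)) := by
        rw [Measure.finset_sum_apply]
        simp [Measure.smul_apply, smul_eq_mul]
    _ = ∑ j, pv j * (if j = i then μ (Φ.cyl w) else 0) := by
        refine Finset.sum_congr rfl fun j _ => ?_
        rw [Measure.map_apply (Φ.S_continuous j).measurable hmeas, key j]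
    _ = pv i * μ (Φ.cyl w) := by simp

theorem SelfSimilar.measure_cyl_pos (hμ : Φ.SelfSimilar pv μ) (w : List (Fin m)) :
    0 < μ (Φ.cyl w) := by
  induction w with
  | nil => rw [cyl_nil, hμ.2.2.2.1]; exact one_pos
  | cons i w ih =>
      rw [hμ.measure_cyl_cons i w]
      exact ENNReal.mul_pos (hμ.2.1 i).ne' ih.ne'

theorem measure_cyl_le_one [IsProbabilityMeasure μ] (w : List (Fin m)) :
    μ (Φ.cyl w) ≤ 1 := prob_le_one



theorem lintegral_indicator_cyl (Φ : IFS d m) (μ : Measure (Pt d)) (w v : List (Fin m)) :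
    ∫⁻ y in Φ.cyl v, ENNReal.ofReal |((Φ.cyl w).indicator fun _ => (1 : ℝ)) y| ∂μ =
      μ (Φ.cyl w ∩ Φ.cyl v) := by
  have h : ∀ y, ENNReal.ofReal |((Φ.cyl w).indicator fun _ => (1 : ℝ)) y| =
      (Φ.cyl w).indicator (fun _ => (1 : ℝ≥0∞)) y := by
    intro y
    by_cases hy : y ∈ Φ.cyl w <;> simp [indicator, hy]
  simp_rw [h]
  rw [lintegral_indicator (Φ.cyl_measurable w), setLIntegral_one,
    Measure.restrict_apply (Φ.cyl_measurable w)]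

theorem maxOp_indicator_le_one (Φ : IFS d m) (μ : Measure (Pt d)) (w : List (Fin m))
    (x : Pt d) : Φ.maxOp μ ((Φ.cyl w).indicator fun _ => (1 : ℝ)) x ≤ 1 := by
  refine iSup₂_le fun v _ => ?_
  rw [Φ.lintegral_indicator_cyl μ w v]
  rcases eq_or_ne (μ (Φ.cyl v)) 0 with h0 | h0
  · have : μ (Φ.cyl w ∩ Φ.cyl v) = 0 :=
      measure_mono_null inter_subset_right h0
    simp [this]
  rcases eq_or_ne (μ (Φ.cyl v)) ∞ with htop | htop
  · simp [htop]
  calc (μ (Φ.cyl v))⁻¹ * μ (Φ.cyl w ∩ Φ.cyl v) ≤ (μ (Φ.cyl v))⁻¹ * μ (Φ.cyl v) :=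
        mul_le_mul_right (measure_mono inter_subset_right) _
    _ = 1 := ENNReal.inv_mul_cancel h0 htop

theorem hContent_le_of_subset (Φ : IFS d m) (μ : Measure (Pt d)) (s α : ℝ)
    {E : Set (Pt d)} {v : List (Fin m)} (h : E ⊆ Φ.cyl v) :
    Φ.hContent μ s α E ≤ μ (Φ.cyl v) ^ (α / s) := by
  have hcov : E ⊆ ⋃ u ∈ ({v} : Set (List (Fin m))), Φ.cyl u := by simpa using h
  calc Φ.hContent μ s α E
      ≤ ⨅ (_ : ({v} : Set (List (Fin m))).Countable)
          (_ : E ⊆ ⋃ u ∈ ({v} : Set (List (Fin m))), Φ.cyl u),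
          ∑' u : ({v} : Set (List (Fin m))), μ (Φ.cyl u.1) ^ (α / s) :=
        iInf_le _ ({v} : Set (List (Fin m)))
    _ = ∑' u : ({v} : Set (List (Fin m))), μ (Φ.cyl u.1) ^ (α / s) := by
        rw [iInf_pos (countable_singleton v), iInf_pos hcov]
    _ = μ (Φ.cyl v) ^ (α / s) := tsum_singleton v (fun u => μ (Φ.cyl u) ^ (α / s))

theorem hContent_empty (Φ : IFS d m) (μ : Measure (Pt d)) (s α : ℝ) :
    Φ.hContent μ s α ∅ = 0 := by
  refine le_antisymm ?_ zero_le
  have hcov : (∅ : Set (Pt d)) ⊆ ⋃ u ∈ (∅ : Set (List (Fin m))), Φ.cyl u := by simp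
  calc Φ.hContent μ s α ∅
      ≤ ⨅ (_ : (∅ : Set (List (Fin m))).Countable)
          (_ : (∅ : Set (Pt d)) ⊆ ⋃ u ∈ (∅ : Set (List (Fin m))), Φ.cyl u),
          ∑' u : (∅ : Set (List (Fin m))), μ (Φ.cyl u.1) ^ (α / s) :=
        iInf_le _ (∅ : Set (List (Fin m)))
    _ = ∑' u : (∅ : Set (List (Fin m))), μ (Φ.cyl u.1) ^ (α / s) := by
        rw [iInf_pos countable_empty, iInf_pos hcov]
    _ = 0 := tsum_empty

theorem SelfSimilar.exists_cover (hμ : Φ.SelfSimilar pv μ) (w : List (Fin m))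
    {lam : ℝ≥0∞} (h0 : 0 < lam) (h1 : lam < 1) :
    ∃ v : List (Fin m),
      (∀ x : Pt d, lam < Φ.maxOp μ ((Φ.cyl w).indicator fun _ => (1 : ℝ)) x → x ∈ Φ.cyl v) ∧
      μ (Φ.cyl v) ≤ μ (Φ.cyl w) / lam := by
  classical
  haveI hprob := hμ.2.2.1
  set a := μ (Φ.cyl w) with ha_def
  have ha0 : a ≠ 0 := (hμ.measure_cyl_pos w).ne'
  have hane : a ≠ ∞ := measure_ne_top μ _
  have hlam_ne : lam ≠ ∞ := h1.ne_top
  have hlt : a < a / lam := by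
    rw [ENNReal.lt_div_iff_mul_lt (Or.inl h0.ne') (Or.inl hlam_ne)]
    calc a * lam < a * 1 := ENNReal.mul_lt_mul_right ha0 hane h1
      _ = a := mul_one a
  have hPlen : μ (Φ.cyl (w.take w.length)) < a / lam := by
    rwa [List.take_length]
  have hex : ∃ n, μ (Φ.cyl (w.take n)) < a / lam := ⟨w.length, hPlen⟩
  set N := Nat.find hex with hN_def
  have hNspec : μ (Φ.cyl (w.take N)) < a / lam := Nat.find_spec hex
  refine ⟨w.take N, ?_, hNspec.le⟩
  intro x hx
  rw [maxOp] at hx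
  obtain ⟨v', hv'⟩ := lt_iSup_iff.mp hx
  obtain ⟨hxv', ht⟩ := lt_iSup_iff.mp hv'
  rw [Φ.lintegral_indicator_cyl μ w v'] at ht
  have hne : (Φ.cyl w ∩ Φ.cyl v').Nonempty := by
    refine nonempty_of_measure_ne_zero (μ := μ) ?_
    intro hz
    rw [hz, mul_zero] at ht
    exact (h0.trans ht).ne rfl
  have hv'0 : μ (Φ.cyl v') ≠ 0 := (hμ.measure_cyl_pos v').ne'
  have hv'top : μ (Φ.cyl v') ≠ ∞ := measure_ne_top μ _
  rcases Φ.prefix_or_prefix w v' hne with h | h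
  · -- w <+: v' : x ∈ cyl v' ⊆ cyl w ⊆ cyl (w.take N)
    have hN : N ≤ w.length := Nat.find_le hPlen
    exact Φ.cyl_anti (List.take_prefix N w) (Φ.cyl_anti h hxv')
  · -- v' <+: w
    have hcap : μ (Φ.cyl w ∩ Φ.cyl v') = a := by
      rw [inter_eq_left.mpr (Φ.cyl_anti h)]
    rw [hcap] at ht
    have hP : μ (Φ.cyl (w.take v'.length)) < a / lam := by
      rw [← List.prefix_iff_eq_take.mp h]
      rw [ENNReal.lt_div_iff_mul_lt (Or.inl h0.ne') (Or.inl hlam_ne), mul_comm]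
      have h2 : lam * μ (Φ.cyl v') < ((μ (Φ.cyl v'))⁻¹ * a) * μ (Φ.cyl v') :=
        ENNReal.mul_lt_mul_left hv'0 hv'top ht
      have heq : ((μ (Φ.cyl v'))⁻¹ * a) * μ (Φ.cyl v') = a := by
        rw [mul_comm ((μ (Φ.cyl v'))⁻¹) a, mul_assoc,
          ENNReal.inv_mul_cancel hv'0 hv'top, mul_one]
      rwa [heq] at h2
    have hN : N ≤ v'.length := Nat.find_le hP
    have hpre : w.take N <+: v' := by
      rw [List.prefix_iff_eq_take.mp h]
      exact List.take_prefix_take_left hN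
    exact Φ.cyl_anti hpre hxv'


end IFS

/-- The Choquet integral of `g` over `E` with respect to the monotone set function `ν`. -/
def choquetInt {X : Type*} (ν : Set X → ℝ≥0∞) (E : Set X) (g : X → ℝ≥0∞) : ℝ≥0∞ :=
  ∫⁻ t in Set.Ioi (0 : ℝ), ν {x ∈ E | ENNReal.ofReal t < g x}

/-- `log⁺ t = max (0, log t)`. -/
def posLog (t : ℝ) : ℝ := max 0 (Real.log t)

/-- Key estimate: the Choquet integral of the `p`-th power of the maximal function of the
indicator of a basic cube is bounded by `(2p/(p - α/s)) μ(K_w)^{α/s}`. -/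
theorem maxOp_indicator (d m : ℕ) (Φ : IFS d m) (pv : Fin m → ℝ≥0∞)
    (μ : Measure (Pt d)) (hμ : Φ.SelfSimilar pv μ)
    (s : ℝ) (hs : 0 < s) (hdim : ∑ i, Φ.r i ^ s = 1)
    (α : ℝ) (hα : 0 < α) (hαs : α ≤ s)
    (p : ℝ) (hp : α / s < p) (w : List (Fin m)) :
    choquetInt (Φ.hContent μ s α) Φ.K
        (fun x => Φ.maxOp μ ((Φ.cyl w).indicator fun _ => (1 : ℝ)) x ^ p) ≤
      ENNReal.ofReal (2 * p / (p - α / s)) * μ (Φ.cyl w) ^ (α / s) := by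
  haveI hprob := hμ.2.2.1
  set M : Pt d → ℝ≥0∞ := Φ.maxOp μ ((Φ.cyl w).indicator fun _ => (1 : ℝ)) with hM
  set a : ℝ≥0∞ := μ (Φ.cyl w) with ha
  set c : ℝ≥0∞ := a ^ (α / s) with hc
  have hαs_pos : 0 < α / s := div_pos hα hs
  have hp0 : 0 < p := hαs_pos.trans hp
  set β : ℝ := α / (s * p) with hβ
  have hβ_eq : β = (α / s) / p := by rw [hβ, div_div]
  have hβ0 : 0 < β := by rw [hβ_eq]; exact div_pos hαs_pos hp0
  have hβ1 : β < 1 := by rw [hβ_eq]; exact (div_lt_one hp0).mpr hp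
  have hane : a ≠ ∞ := measure_ne_top μ _
  have hc_ne_top : c ≠ ∞ := ENNReal.rpow_ne_top_of_nonneg hαs_pos.le hane
  -- distribution function bound
  have hdist : ∀ t : ℝ, t ∈ Ioo (0 : ℝ) 1 →
      Φ.hContent μ s α {x ∈ Φ.K | ENNReal.ofReal t < M x ^ p} ≤
        c * ENNReal.ofReal t ^ (-β) := by
    intro t ht
    set lam : ℝ≥0∞ := ENNReal.ofReal t ^ (1 / p) with hlam
    have htpos : (0 : ℝ≥0∞) < ENNReal.ofReal t := ENNReal.ofReal_pos.mpr ht.1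
    have htlt1 : ENNReal.ofReal t < 1 := ENNReal.ofReal_lt_one.mpr ht.2
    have hlam0 : 0 < lam := ENNReal.rpow_pos htpos ENNReal.ofReal_ne_top
    have hlam1 : lam < 1 := ENNReal.rpow_lt_one htlt1 (by positivity)
    obtain ⟨v, hv_mem, hv_meas⟩ := hμ.exists_cover w hlam0 hlam1
    have hsub : {x ∈ Φ.K | ENNReal.ofReal t < M x ^ p} ⊆ Φ.cyl v := by
      rintro x ⟨-, hx⟩
      refine hv_mem x ?_
      have h1 : ENNReal.ofReal t ^ (1 / p) < (M x ^ p) ^ (1 / p) :=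
        ENNReal.rpow_lt_rpow hx (by positivity)
      rwa [← ENNReal.rpow_mul, mul_one_div_cancel hp0.ne', ENNReal.rpow_one] at h1
    calc Φ.hContent μ s α {x ∈ Φ.K | ENNReal.ofReal t < M x ^ p}
        ≤ μ (Φ.cyl v) ^ (α / s) := Φ.hContent_le_of_subset μ s α hsub
      _ ≤ (a / lam) ^ (α / s) := ENNReal.rpow_le_rpow hv_meas hαs_pos.le
      _ = c * ENNReal.ofReal t ^ (-β) := by
          rw [div_eq_mul_inv, ENNReal.mul_rpow_of_ne_top hane
            (ENNReal.inv_ne_top.mpr hlam0.ne'), ← hc]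
          congr 1
          rw [ENNReal.inv_rpow, ← ENNReal.rpow_neg, hlam, ← ENNReal.rpow_mul]
          congr 1
          rw [hβ_eq]
          ring
  have hzero : ∀ t : ℝ, 1 ≤ t →
      Φ.hContent μ s α {x ∈ Φ.K | ENNReal.ofReal t < M x ^ p} = 0 := by
    intro t ht
    have hempty : {x ∈ Φ.K | ENNReal.ofReal t < M x ^ p} = ∅ := by
      refine eq_empty_iff_forall_notMem.mpr fun x hx' => ?_
      obtain ⟨-, hx⟩ := hx'
      have h1 : M x ^ p ≤ 1 :=
        ENNReal.rpow_le_one (Φ.maxOp_indicator_le_one μ w x) hp0.le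
      have h2 : (1 : ℝ≥0∞) ≤ ENNReal.ofReal t := ENNReal.one_le_ofReal.mpr ht
      exact absurd (hx.trans_le h1) (not_lt.mpr h2)
    rw [hempty, Φ.hContent_empty]
  -- main integral estimate
  calc choquetInt (Φ.hContent μ s α) Φ.K (fun x => M x ^ p)
      ≤ ∫⁻ t in Ioi (0 : ℝ),
          (Ioo (0 : ℝ) 1).indicator (fun t => c * ENNReal.ofReal t ^ (-β)) t := by
        refine setLIntegral_mono' measurableSet_Ioi fun t ht => ?_
        rcases lt_or_ge t 1 with h1 | h1
        · have hmem : t ∈ Ioo (0:ℝ) 1 := ⟨ht, h1⟩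
          rw [indicator_of_mem hmem]
          exact hdist t hmem
        · rw [hzero t h1]; exact zero_le
    _ = ∫⁻ t in Ioo (0 : ℝ) 1, c * ENNReal.ofReal t ^ (-β) := by
        rw [lintegral_indicator measurableSet_Ioo, Measure.restrict_restrict measurableSet_Ioo,
          inter_eq_left.mpr Ioo_subset_Ioi_self]
    _ = c * ∫⁻ t in Ioo (0 : ℝ) 1, ENNReal.ofReal t ^ (-β) :=
        lintegral_const_mul' c _ hc_ne_top
    _ = c * ENNReal.ofReal (1 / (1 - β)) := by
        congr 1
        have hcong : ∫⁻ t in Ioo (0 : ℝ) 1, ENNReal.ofReal t ^ (-β) =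
            ∫⁻ t in Ioo (0 : ℝ) 1, ENNReal.ofReal (t ^ (-β)) :=
          setLIntegral_congr_fun measurableSet_Ioo
            (fun t ht => ENNReal.ofReal_rpow_of_pos ht.1)
        have hInt : IntegrableOn (fun t : ℝ => t ^ (-β)) (Ioo (0 : ℝ) 1) :=
          ((intervalIntegral.intervalIntegrable_rpow' (by linarith : (-1:ℝ) < -β)).1).mono_set
            Ioo_subset_Ioc_self
        have hnn : 0 ≤ᵐ[volume.restrict (Ioo (0:ℝ) 1)] fun t : ℝ => t ^ (-β) :=
          (ae_restrict_iff' measurableSet_Ioo).2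
            (ae_of_all _ fun t ht => Real.rpow_nonneg ht.1.le _)
        rw [hcong, ← ofReal_integral_eq_lintegral_ofReal hInt hnn]
        congr 1
        rw [← integral_Ioc_eq_integral_Ioo, ← intervalIntegral.integral_of_le zero_le_one,
          integral_rpow (Or.inl (by linarith : (-1:ℝ) < -β)), Real.one_rpow,
          Real.zero_rpow (ne_of_gt (by linarith : (0:ℝ) < -β + 1))]
        rw [show -β + 1 = 1 - β by ring]
        ring
    _ ≤ ENNReal.ofReal (2 * p / (p - α / s)) * c := by
        rw [mul_comm]
        refine mul_le_mul_left (ENNReal.ofReal_le_ofReal ?_) c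
        have hd : 0 < p - α / s := by linarith
        have hsp : 0 < s * p := mul_pos hs hp0
        have h1β : 1 - β = (p - α / s) / p := by
          rw [hβ_eq, one_sub_div hp0.ne']
        rw [h1β, one_div_div]
        rw [div_le_div_iff₀ hd hd]
        nlinarith
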